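/- arXiv:1607.07658 — 2 statements merged into one kernel-verified Lean document; each statement's English description precedes it below -/
import Mathlib

section
/- For every l ∈ {1,...,k} and every x ∈ {l+1,...,n-1}, one has (x + 1 - l) · c_l(x) - x · c_l(x+1) = C(n-x-1, k-l) / (l! · C(n,k)). -/
open Finset

namespace Secretary

/-- Binomial coefficient on integers: zero when `b < 0` or `b > a`. -/
noncomputable def Cb (a b : ℤ) : ℝ :=
  if 0 ≤ b ∧ b ≤ a then (Nat.choose a.toNat b.toNat : ℝ) else 0

/-- The value `π(i)` of a permutation of `{1,...,n}` in 1-based indexing. -/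
def pv (n : ℕ) (π : Equiv.Perm (Fin n)) (i : ℕ) : ℕ :=
  if h : i - 1 < n then ((π ⟨i - 1, h⟩ : Fin n) : ℕ) + 1 else 0

/-- The relative rank `ρ_π(i)`: the number of `j ∈ {1,...,i}` with `π(j) ≤ π(i)`. -/
def rho (n : ℕ) (π : Equiv.Perm (Fin n)) (i : ℕ) : ℕ :=
  ((Finset.Icc 1 i).filter fun j => pv n π j ≤ pv n π i).card

/-- Extension of a sequence `s` with `s (k+1) = n - 1`. -/
def sExt (n k : ℕ) (s : ℕ → ℕ) (l : ℕ) : ℕ := if l = k + 1 then n - 1 else s l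

/-- `i` is a `(π, l, w)`-element. -/
def IsElem (n k : ℕ) (s : ℕ → ℕ) (π : Equiv.Perm (Fin n)) (l i : ℕ) : Prop :=
  sExt n k s l < i ∧ i ≤ sExt n k s (l + 1) ∧ rho n π i ≤ l

/-- `l` is a `w`-threshold of `π`. -/
def IsThreshold (n k : ℕ) (s : ℕ → ℕ) (π : Equiv.Perm (Fin n)) (l : ℕ) : Prop :=
  1 ≤ l ∧ l ≤ k ∧ ∃ i, IsElem n k s π l i

open Classical in
/-- `π` is a lucky permutation for the sequence `w = s`. -/
def Lucky (n k : ℕ) (s : ℕ → ℕ) (π : Equiv.Perm (Fin n)) : Prop :=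
  if ∃ l, IsThreshold n k s π l then
    pv n π (sInf {i | IsElem n k s π (sInf {l | IsThreshold n k s π l}) i}) ≤ k
  else pv n π n ≤ k

/-- The maps `r_l` (first argument an integer `l ≤ k`). -/
noncomputable def rr (n k : ℕ) (l : ℤ) (x : ℕ) : ℝ :=
  if l < 0 then 0
  else if l = 0 then
    1 / (x : ℝ) - (k : ℝ) / n - Cb ((n : ℤ) - x - 1) k / ((x : ℝ) * Cb n k)
      - (1 / Cb n k) * ∑ j ∈ Finset.Icc 1 x, Cb ((n : ℤ) - j - 1) ((k : ℤ) - 1) / (j : ℝ)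
  else
    ((Nat.factorial (x - l.toNat - 1) : ℝ) / (Nat.factorial x : ℝ)) *
      (1 - (1 / ((l : ℝ) * Cb n x)) *
        ∑ j ∈ Finset.range (l.toNat + 1),
          ((l : ℝ) - j) * Cb k j * Cb ((n : ℤ) - k) ((x : ℤ) - j))

/-- The constant `δ_{k,n}`. -/
noncomputable def delta (n k : ℕ) : ℝ :=
  if k = 1 then -(1 / (n : ℝ)) * ∑ j ∈ Finset.Icc 1 (n - 1), (1 : ℝ) / j
  else (Nat.factorial (n - k) : ℝ) / (Nat.factorial n : ℝ)

/-- The maps `d_l` for `0 ≤ l ≤ k`. -/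
noncomputable def d (n k : ℕ) (l x : ℕ) : ℝ :=
  if l = 0 then
    -1 + (k : ℝ) * x / n + Cb ((n : ℤ) - x - 1) k / Cb n k
      + ((x : ℝ) / Cb n k) * ∑ j ∈ Finset.Icc 1 x, Cb ((n : ℤ) - j - 1) ((k : ℤ) - 1) / (j : ℝ)
  else if l = 1 then
    -((k : ℝ) / n) - (1 / Cb n k) * ∑ j ∈ Finset.Icc 1 x, Cb ((n : ℤ) - j - 1) ((k : ℤ) - 1) / (j : ℝ)
  else
    ((k : ℝ) * (Nat.factorial x : ℝ) * (Nat.factorial (n - l - x) : ℝ) /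
        ((l : ℝ) * ((l : ℝ) - 1) * (Nat.factorial n : ℝ))) *
      ∑ j ∈ Finset.range (l - 1), Cb ((k : ℤ) - 1) j * Cb ((n : ℤ) - k) ((x : ℤ) + l - j - 1)

/-- The maps `c_l(x) = d_l(x - l)`. -/
noncomputable def c (n k l x : ℕ) : ℝ := d n k l (x - l)

/-- The constant `ξ_{k,n}`. -/
noncomputable def xi (n k : ℕ) : ℝ :=
  (k : ℝ) * (Nat.factorial (n - k - 1) : ℝ) / (Nat.factorial n : ℝ)

/-- `w` (given as a 1-indexed function) is a word in `X^{(k-l)}`, i.e. its `j`-th letter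
belongs to `X_{l+j} = {l+j, ..., n-1}` for `1 ≤ j ≤ k - l`. -/
def memX (n k l : ℕ) (w : ℕ → ℕ) : Prop :=
  ∀ j ∈ Finset.Icc 1 (k - l), l + j ≤ w j ∧ w j ≤ n - 1

/-- The left-shift operator removing the first `l` letters of a word. -/
def shift (l : ℕ) (w : ℕ → ℕ) : ℕ → ℕ := fun j => w (l + j)

/-- The maps `R_{l,j}`. -/
noncomputable def Rmap (n k l : ℕ) (w : ℕ → ℕ) (j : ℕ) : ℝ :=
  if 1 ≤ j ∧ j ≤ k - l then
    rr n k ((l : ℤ) + j - 1) (w j)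
      - rr n k ((l : ℤ) + j - 1) (if j = k - l then n - 1 else w (j + 1))
  else 0

/-- The maps `Γ_{l,j,j'}`. -/
noncomputable def Gam (n k l j j' : ℕ) (w : ℕ → ℕ) : ℝ :=
  if 1 ≤ j ∧ j ≤ j' ∧ j' ≤ k - l then
    ∏ t ∈ Finset.Icc j j', ((w t : ℝ) - l - t + 1)
  else 1

/-- The maps `T_l`. -/
noncomputable def Tmap (n k l : ℕ) (w : ℕ → ℕ) : ℝ :=
  (∑ j ∈ Finset.Icc 1 (k - l), Rmap n k l w j * Gam n k l 1 j w)
    + xi n k * Gam n k l 1 (k - l) w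

/-- The maps `D_l(w) = r_{l-1}(x_1) - T_l(w)`, with `x_1 := n-1` when `l = k`. -/
noncomputable def Dmap (n k l : ℕ) (w : ℕ → ℕ) : ℝ :=
  rr n k ((l : ℤ) - 1) (if l = k then n - 1 else w 1) - Tmap n k l w

/-- The maps `F_{l,w}(x) = -c_{l-1}(x) - x·D_l(w)`. -/
noncomputable def Fmap (n k l : ℕ) (w : ℕ → ℕ) (x : ℕ) : ℝ :=
  -(c n k (l - 1) x) - (x : ℝ) * Dmap n k l w

/-- The maps `a_l`. -/
noncomputable def amap (n k l x : ℕ) : ℝ :=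
  (1 / Cb n x) * ∑ j ∈ Finset.range (l + 1), Cb k j * Cb ((n : ℤ) - k) ((x : ℤ) - j)

/-- The maps `b_l`. -/
noncomputable def bmap (n k l x : ℕ) : ℝ :=
  (1 / ((l : ℝ) * Cb n x)) *
    ∑ j ∈ Finset.range (l + 1), (j : ℝ) * Cb k j * Cb ((n : ℤ) - k) ((x : ℤ) - j)

/-- `π ∈ S(l0, i0)`: `π` is lucky for `s`, `l0` is the smallest `s`-threshold of `π`,
and `i0` is the smallest `(π, l0, s)`-element. -/
def SMem (n k : ℕ) (s : ℕ → ℕ) (l0 i0 : ℕ) (π : Equiv.Perm (Fin n)) : Prop :=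
  Lucky n k s π ∧ IsLeast {l | IsThreshold n k s π l} l0 ∧
    IsLeast {i | IsElem n k s π l0 i} i0

/-- `π ∈ S(Y, Y', l0, i0)`. -/
def SYYMem (n k : ℕ) (s : ℕ → ℕ) (Y Y' : Finset ℕ) (l0 i0 : ℕ) (π : Equiv.Perm (Fin n)) :
    Prop :=
  SMem n k s l0 i0 π ∧ ((Finset.Icc 1 i0).image (pv n π)) ∩ Finset.Icc 1 k = Y ∧
    ((Finset.Icc 1 i0).image (pv n π)) ∩ Finset.Icc (k + 1) n = Y'

lemma Cb_natCast (a b : ℕ) : Cb a b = (a.choose b : ℝ) := by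
  unfold Cb
  rcases le_or_gt b a with h | h
  · rw [if_pos ⟨Int.natCast_nonneg b, by exact_mod_cast h⟩]
    simp
  · rw [if_neg (by rintro ⟨-, hb⟩; omega), Nat.choose_eq_zero_of_lt h]
    simp

lemma cast_choose_step (a b : ℕ) :
    ((b:ℝ)+1) * (a.choose (b+1)) = ((a:ℝ) - b) * (a.choose b) := by
  rcases le_or_gt b a with h | h
  · have h2 : ((a.choose (b+1) * (b+1) : ℕ) : ℝ) = ((a.choose b * (a-b) : ℕ):ℝ) := by
      rw [Nat.choose_succ_right_eq a b]
    push_cast [Nat.cast_sub h] at h2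
    linarith [h2]
  · rw [Nat.choose_eq_zero_of_lt h, Nat.choose_eq_zero_of_lt (by omega)]
    ring

lemma sum_id (a c : ℕ) : ∀ (L m : ℕ), L ≤ m →
    ((a:ℝ) + c - m) * ∑ j ∈ Finset.range L, (c.choose j : ℝ) * (a.choose (m-j)) =
    ((m:ℝ)+1) * (∑ j ∈ Finset.range L, (c.choose j : ℝ) * (a.choose (m+1-j)))
      + (L : ℝ) * (c.choose L) * (a.choose (m+1-L)) := by
  intro L
  induction L with
  | zero => intro m _; simp
  | succ L ih =>
    intro m hLm
    have hL : L ≤ m := by omega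
    rw [Finset.sum_range_succ, Finset.sum_range_succ, mul_add, mul_add, ih m hL]
    have h1 := cast_choose_step a (m - L)
    have h2 := cast_choose_step c L
    rw [show m - L + 1 = m + 1 - L by omega, Nat.cast_sub hL] at h1
    rw [show m + 1 - (L+1) = m - L by omega]
    push_cast
    linear_combination (-(c.choose L : ℝ)) * h1 - ((a.choose (m - L)) : ℝ) * h2

lemma key (n k l y p : ℕ) (h2 : 2 ≤ l) (hlk : l ≤ k) (hkn : k ≤ n)
    (hn : n = y + l + p + 1) :
    (k:ℝ) * (Nat.factorial (y+1)) * (Nat.factorial p) * ((l:ℝ)-1) * ((k-1).choose (l-1)) *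
      ((n-k).choose (y+1)) * (Nat.factorial l) * (n.choose k)
    = (l:ℝ) * ((l:ℝ)-1) * (Nat.factorial n) * (p.choose (k-l)) := by
  rcases le_or_gt (k-l) p with h | h
  · rw [Nat.cast_choose ℝ (show l-1 ≤ k-1 by omega),
        Nat.cast_choose ℝ (show y+1 ≤ n-k by omega),
        Nat.cast_choose ℝ (show k ≤ n by omega),
        Nat.cast_choose ℝ h,
        show k-1-(l-1) = k-l by omega,
        show n-k-(y+1) = p-(k-l) by omega]
    have e1 : (Nat.factorial k : ℝ) = k * Nat.factorial (k-1) := by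
      exact_mod_cast (Nat.mul_factorial_pred (show k ≠ 0 by omega)).symm
    have e2 : (Nat.factorial l : ℝ) = l * Nat.factorial (l-1) := by
      exact_mod_cast (Nat.mul_factorial_pred (show l ≠ 0 by omega)).symm
    have e3 : ((l:ℝ)-1) = ((l-1 : ℕ):ℝ) := by
      push_cast [Nat.cast_sub (show 1 ≤ l by omega)]; ring
    rw [e1, e2, e3]
    have f1 : (Nat.factorial (l-1) : ℝ) ≠ 0 := by positivity
    have f2 : (Nat.factorial (k-l) : ℝ) ≠ 0 := by positivity
    have f3 : (Nat.factorial (p-(k-l)) : ℝ) ≠ 0 := by positivity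
    have f4 : (Nat.factorial (k-1) : ℝ) ≠ 0 := by positivity
    have f5 : (Nat.factorial (n-k) : ℝ) ≠ 0 := by positivity
    have f6 : (Nat.factorial (y+1) : ℝ) ≠ 0 := by positivity
    have f7 : (k:ℝ) ≠ 0 := Nat.cast_ne_zero.mpr (by omega)
    field_simp
  · rw [Nat.choose_eq_zero_of_lt h, Nat.choose_eq_zero_of_lt (show n-k < y+1 by omega)]
    push_cast
    ring

theorem c_diff (n k : ℕ) (hk : 1 ≤ k) (hkn : k < n) :
    ∀ l ∈ Finset.Icc 1 k, ∀ x ∈ Finset.Icc (l + 1) (n - 1),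
      ((x : ℝ) + 1 - l) * c n k l x - (x : ℝ) * c n k l (x + 1) =
        Cb ((n : ℤ) - x - 1) ((k : ℤ) - l) / ((Nat.factorial l : ℝ) * Cb n k) := by
  intro l hl x hx
  simp only [Finset.mem_Icc] at hl hx
  obtain ⟨hl1, hlk⟩ := hl
  obtain ⟨hx1, hx2⟩ := hx
  have hCb : Cb n k = (n.choose k : ℝ) := Cb_natCast n k
  have hCne : Cb n k ≠ 0 := by
    rw [hCb]
    exact_mod_cast (Nat.choose_pos (le_of_lt hkn)).ne'
  rcases eq_or_lt_of_le hl1 with hl1' | hl2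
  · -- l = 1
    subst hl1'
    obtain ⟨y, rfl⟩ : ∃ y, x = y + 1 := ⟨x - 1, by omega⟩
    have hy : 1 ≤ y := by omega
    unfold c d
    rw [show y + 1 - 1 = y by omega, show y + 1 + 1 - 1 = y + 1 by omega]
    simp only [if_neg (show ¬(1:ℕ) = 0 by omega), if_pos rfl]
    rw [Finset.sum_Icc_succ_top (show 1 ≤ y + 1 by omega)]
    rw [show ((k:ℤ) - ((1:ℕ):ℤ)) = (k:ℤ) - 1 by push_cast; ring,
        Nat.factorial_one]
    have hyne : ((y:ℝ)+1) ≠ 0 := by positivity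
    have hnne : (n:ℝ) ≠ 0 := Nat.cast_ne_zero.mpr (by omega)
    push_cast
    field_simp
    ring
  · -- 2 ≤ l
    obtain ⟨y, rfl⟩ : ∃ y, x = y + l := ⟨x - l, by omega⟩
    have hy : 1 ≤ y := by omega
    obtain ⟨p, hp⟩ : ∃ p, n = y + l + p + 1 := ⟨n - (y + l) - 1, by omega⟩
    unfold c d
    rw [show y + l - l = y by omega, show y + l + 1 - l = y + 1 by omega]
    simp only [if_neg (show ¬l = 0 by omega), if_neg (show ¬l = 1 by omega)]
    rw [show n - l - y = p + 1 by omega, show n - l - (y+1) = p by omega]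
    have hsum0 : ∑ j ∈ Finset.range (l-1), Cb ((k:ℤ)-1) j * Cb ((n:ℤ)-k) ((y:ℤ)+l-j-1)
        = ∑ j ∈ Finset.range (l-1), ((k-1).choose j : ℝ) * ((n-k).choose (y+l-1-j)) := by
      apply Finset.sum_congr rfl
      intro j hj
      simp only [Finset.mem_range] at hj
      rw [show ((k:ℤ)-1) = ((k-1 : ℕ):ℤ) by omega,
          show ((y:ℤ)+l-j-1) = ((y+l-1-j : ℕ):ℤ) by omega,
          show ((n:ℤ)-k) = ((n-k:ℕ):ℤ) by omega,
          Cb_natCast, Cb_natCast]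
    have hsum1 : ∑ j ∈ Finset.range (l-1), Cb ((k:ℤ)-1) j * Cb ((n:ℤ)-k) (((y+1:ℕ):ℤ)+l-j-1)
        = ∑ j ∈ Finset.range (l-1), ((k-1).choose j : ℝ) * ((n-k).choose (y+l-j)) := by
      apply Finset.sum_congr rfl
      intro j hj
      simp only [Finset.mem_range] at hj
      rw [show ((k:ℤ)-1) = ((k-1 : ℕ):ℤ) by omega,
          show (((y+1:ℕ):ℤ)+l-j-1) = ((y+l-j : ℕ):ℤ) by push_cast; omega,
          show ((n:ℤ)-k) = ((n-k:ℕ):ℤ) by omega,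
          Cb_natCast, Cb_natCast]
    rw [hsum0, hsum1, hCb]
    rw [show ((n:ℤ) - ((y+l:ℕ):ℤ) - 1) = ((p:ℕ):ℤ) by omega,
        show ((k:ℤ) - (l:ℤ)) = ((k-l:ℕ):ℤ) by omega,
        Cb_natCast]
    -- abbreviations
    set S0 : ℝ := ∑ j ∈ Finset.range (l-1), ((k-1).choose j : ℝ) * ((n-k).choose (y+l-1-j)) with hS0
    set S1 : ℝ := ∑ j ∈ Finset.range (l-1), ((k-1).choose j : ℝ) * ((n-k).choose (y+l-j)) with hS1
    have hnR : (n:ℝ) = y + l + p + 1 := by exact_mod_cast congrArg (Nat.cast : ℕ → ℝ) hp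
    have hS := sum_id (n-k) (k-1) (l-1) (y+l-1) (by omega)
    rw [show y+l-1+1 = y+l by omega, show y+l-(l-1) = y+1 by omega] at hS
    rw [Nat.cast_sub (show k ≤ n by omega), Nat.cast_sub (show 1 ≤ k by omega),
        Nat.cast_sub (show 1 ≤ y + l by omega), Nat.cast_sub (show 1 ≤ l by omega)] at hS
    push_cast at hS
    have hB : ((p:ℝ)+1) * S0 - ((y:ℝ)+l) * S1
        = ((l:ℝ)-1) * ((k-1).choose (l-1) : ℝ) * ((n-k).choose (y+1) : ℝ) := by
      rw [hS0, hS1]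
      linear_combination hS - (∑ j ∈ Finset.range (l-1), ((k-1).choose j : ℝ) * ((n-k).choose (y+l-1-j))) * hnR
    have hfrac1 : (Nat.factorial (p+1) : ℝ) = ((p:ℝ)+1) * Nat.factorial p := by
      exact_mod_cast Nat.factorial_succ p
    have hfrac2 : (Nat.factorial (y+1) : ℝ) = ((y:ℝ)+1) * Nat.factorial y := by
      exact_mod_cast Nat.factorial_succ y
    have hkey := key n k l y p (by omega) hlk (by omega) hp
    have hD1 : (l:ℝ) * ((l:ℝ)-1) * (Nat.factorial n : ℝ) ≠ 0 := by
      have : (l:ℝ) ≥ 2 := by exact_mod_cast hl2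
      have h1 : (Nat.factorial n : ℝ) ≠ 0 := by positivity
      have h2 : (l:ℝ) ≠ 0 := by linarith
      have h3 : (l:ℝ)-1 ≠ 0 := by linarith
      exact mul_ne_zero (mul_ne_zero h2 h3) h1
    have hD2 : (Nat.factorial l : ℝ) * (n.choose k : ℝ) ≠ 0 := by
      have h1 : (Nat.factorial l : ℝ) ≠ 0 := by positivity
      have h2 : (n.choose k : ℝ) ≠ 0 := by
        exact_mod_cast (Nat.choose_pos (le_of_lt hkn)).ne'
      exact mul_ne_zero h1 h2
    calc ((((y:ℕ)+l : ℕ):ℝ) + 1 - l) *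
          ((k:ℝ) * (Nat.factorial y : ℝ) * (Nat.factorial (p+1) : ℝ) /
            ((l:ℝ) * ((l:ℝ)-1) * (Nat.factorial n : ℝ)) * S0)
        - (((y+l : ℕ):ℝ)) *
          ((k:ℝ) * (Nat.factorial (y+1) : ℝ) * (Nat.factorial p : ℝ) /
            ((l:ℝ) * ((l:ℝ)-1) * (Nat.factorial n : ℝ)) * S1)
        = ((k:ℝ) * (Nat.factorial (y+1) : ℝ) * (Nat.factorial p : ℝ) /
            ((l:ℝ) * ((l:ℝ)-1) * (Nat.factorial n : ℝ))) *
            (((p:ℝ)+1) * S0 - ((y:ℝ)+l) * S1) := by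
          rw [hfrac1, hfrac2]
          push_cast
          ring
      _ = ((k:ℝ) * (Nat.factorial (y+1) : ℝ) * (Nat.factorial p : ℝ) /
            ((l:ℝ) * ((l:ℝ)-1) * (Nat.factorial n : ℝ))) *
            (((l:ℝ)-1) * ((k-1).choose (l-1) : ℝ) * ((n-k).choose (y+1) : ℝ)) := by
          rw [hB]
      _ = (p.choose (k-l) : ℝ) / ((Nat.factorial l : ℝ) * (n.choose k : ℝ)) := by
          rw [div_mul_eq_mul_div, div_eq_div_iff hD1 hD2]
          linear_combination hkey
end Secretary
end

section
/- For every l ∈ {2,...,k} and every x ∈ {2,...,n}, one has x · a_{l-1}(x-1) - (x-l) · a_{l-1}(x) = l · a_l(x) and x · b_{l-1}(x-1) - (x-l) · b_{l-1}(x) = l · b_l(x). -/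
open Finset

namespace Secretary

lemma Cb_rec (m y : ℤ) : (y : ℝ) * Cb m y = ((m : ℝ) - y + 1) * Cb m (y - 1) := by
  unfold Cb
  by_cases hy : 1 ≤ y
  · by_cases hym : y ≤ m
    · rw [if_pos ⟨by omega, hym⟩, if_pos ⟨by omega, by omega⟩]
      have h := Nat.choose_succ_right_eq m.toNat (y.toNat - 1)
      have hyt : y.toNat - 1 + 1 = y.toNat := by omega
      rw [hyt] at h
      have h1 : (y - 1).toNat = y.toNat - 1 := by omega
      rw [h1]
      have hy' : (y : ℝ) = (y.toNat : ℝ) := by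
        exact_mod_cast congrArg (Int.cast : ℤ → ℝ) (Int.toNat_of_nonneg (by omega)).symm
      have hm' : ((m : ℝ) - y + 1) = ((m.toNat - (y.toNat - 1) : ℕ) : ℝ) := by
        have h4 : ((m.toNat - (y.toNat - 1) : ℕ) : ℤ) = m - y + 1 := by omega
        exact_mod_cast h4.symm
      rw [hm', hy', ← Nat.cast_mul, ← Nat.cast_mul]
      exact Nat.cast_inj.mpr (by rw [mul_comm, h, mul_comm])
    · by_cases hym1 : y - 1 ≤ m
      · have hym' : y = m + 1 := by omega
        rw [if_neg (show ¬(0 ≤ y ∧ y ≤ m) by omega), if_pos ⟨by omega, hym1⟩]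
        subst hym'
        push_cast
        ring
      · rw [if_neg (show ¬(0 ≤ y ∧ y ≤ m) by omega),
          if_neg (show ¬(0 ≤ y - 1 ∧ y - 1 ≤ m) by omega)]
        ring
  · by_cases hy0 : y = 0
    · subst hy0
      rw [if_neg (show ¬(0 ≤ (0:ℤ) - 1 ∧ (0:ℤ) - 1 ≤ m) by omega)]
      simp
    · rw [if_neg (show ¬(0 ≤ y ∧ y ≤ m) by omega),
        if_neg (show ¬(0 ≤ y - 1 ∧ y - 1 ≤ m) by omega)]
      ring

lemma Cb_term_rec (n k x : ℕ) (j : ℕ) :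
    ((n : ℝ) - x + 1) * (Cb k j * Cb ((n : ℤ) - k) ((x : ℤ) - 1 - j)) =
      ((x : ℝ) - j) * (Cb k j * Cb ((n : ℤ) - k) ((x : ℤ) - j)) +
        ((j : ℝ) + 1) * (Cb k ((j : ℤ) + 1) * Cb ((n : ℤ) - k) ((x : ℤ) - 1 - j)) := by
  have e1 := Cb_rec ((n : ℤ) - k) ((x : ℤ) - j)
  rw [show (x : ℤ) - j - 1 = (x : ℤ) - 1 - j by ring] at e1
  have e2 := Cb_rec (k : ℤ) ((j : ℤ) + 1)
  rw [show (j : ℤ) + 1 - 1 = (j : ℤ) by ring] at e2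
  push_cast at e1 e2 ⊢
  linear_combination (-(Cb k j)) * e1 + (-(Cb ((n : ℤ) - k) ((x : ℤ) - 1 - j))) * e2

lemma sumA (n k x l : ℕ) :
    ((n : ℝ) - x + 1) * (∑ j ∈ range l, Cb k j * Cb ((n : ℤ) - k) ((x : ℤ) - 1 - j))
      - ((x : ℝ) - l) * (∑ j ∈ range l, Cb k j * Cb ((n : ℤ) - k) ((x : ℤ) - j))
    = l * ∑ j ∈ range (l + 1), Cb k j * Cb ((n : ℤ) - k) ((x : ℤ) - j) := by
  set T : ℕ → ℝ := fun j => Cb k j * Cb ((n : ℤ) - k) ((x : ℤ) - j) with hT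
  have tel := Finset.sum_range_sub (fun j => (j : ℝ) * T j) l
  have key : ∀ j ∈ range l,
      ((n : ℝ) - x + 1) * (Cb k j * Cb ((n : ℤ) - k) ((x : ℤ) - 1 - j))
        - ((x : ℝ) - l) * T j - (l : ℝ) * T j
      = ((j : ℝ) + 1) * T (j + 1) - (j : ℝ) * T j := by
    intro j _
    have h := Cb_term_rec n k x j
    simp only [hT]
    push_cast
    rw [show (x : ℤ) - ((j : ℤ) + 1) = (x : ℤ) - 1 - j by ring]
    linear_combination h
  have tel2 : ∑ j ∈ range l,
      (((n : ℝ) - x + 1) * (Cb k j * Cb ((n : ℤ) - k) ((x : ℤ) - 1 - j))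
        - ((x : ℝ) - l) * T j - (l : ℝ) * T j) = (l : ℝ) * T l := by
    rw [Finset.sum_congr rfl key]
    have := Finset.sum_range_sub (fun j => (j : ℝ) * T j) l
    push_cast at this ⊢
    rw [this]
    simp
  rw [Finset.sum_range_succ, mul_add]
  have expand : ∑ j ∈ range l,
      (((n : ℝ) - x + 1) * (Cb k j * Cb ((n : ℤ) - k) ((x : ℤ) - 1 - j))
        - ((x : ℝ) - l) * T j - (l : ℝ) * T j)
      = ((n : ℝ) - x + 1) * (∑ j ∈ range l, Cb k j * Cb ((n : ℤ) - k) ((x : ℤ) - 1 - j))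
        - ((x : ℝ) - l) * (∑ j ∈ range l, T j) - (l : ℝ) * (∑ j ∈ range l, T j) := by
    rw [Finset.sum_sub_distrib, Finset.sum_sub_distrib, ← Finset.mul_sum, ← Finset.mul_sum,
      ← Finset.mul_sum]
  rw [expand] at tel2
  simp only [hT] at tel2 ⊢
  linarith [tel2]

lemma sumB (n k x l : ℕ) :
    ((n : ℝ) - x + 1) * (∑ j ∈ range l, (j : ℝ) * Cb k j * Cb ((n : ℤ) - k) ((x : ℤ) - 1 - j))
      - ((x : ℝ) - l) * (∑ j ∈ range l, (j : ℝ) * Cb k j * Cb ((n : ℤ) - k) ((x : ℤ) - j))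
    = ((l : ℝ) - 1) * ∑ j ∈ range (l + 1), (j : ℝ) * Cb k j * Cb ((n : ℤ) - k) ((x : ℤ) - j) := by
  set T : ℕ → ℝ := fun j => Cb k j * Cb ((n : ℤ) - k) ((x : ℤ) - j) with hT
  have key : ∀ j ∈ range l,
      ((n : ℝ) - x + 1) * ((j : ℝ) * Cb k j * Cb ((n : ℤ) - k) ((x : ℤ) - 1 - j))
        - ((x : ℝ) - l) * ((j : ℝ) * T j) - ((l : ℝ) - 1) * ((j : ℝ) * T j)
      = (((j : ℝ) + 1) - 1) * ((j : ℝ) + 1) * T (j + 1) - ((j : ℝ) - 1) * (j : ℝ) * T j := by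
    intro j _
    have h := Cb_term_rec n k x j
    simp only [hT]
    push_cast
    rw [show (x : ℤ) - ((j : ℤ) + 1) = (x : ℤ) - 1 - j by ring]
    linear_combination (j : ℝ) * h
  have tel2 : ∑ j ∈ range l,
      (((n : ℝ) - x + 1) * ((j : ℝ) * Cb k j * Cb ((n : ℤ) - k) ((x : ℤ) - 1 - j))
        - ((x : ℝ) - l) * ((j : ℝ) * T j) - ((l : ℝ) - 1) * ((j : ℝ) * T j))
      = ((l : ℝ) - 1) * (l : ℝ) * T l := by
    rw [Finset.sum_congr rfl key]
    have := Finset.sum_range_sub (fun j => ((j : ℝ) - 1) * (j : ℝ) * T j) l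
    push_cast at this ⊢
    rw [this]
    simp
  have expand : ∑ j ∈ range l,
      (((n : ℝ) - x + 1) * ((j : ℝ) * Cb k j * Cb ((n : ℤ) - k) ((x : ℤ) - 1 - j))
        - ((x : ℝ) - l) * ((j : ℝ) * T j) - ((l : ℝ) - 1) * ((j : ℝ) * T j))
      = ((n : ℝ) - x + 1) * (∑ j ∈ range l, (j : ℝ) * Cb k j * Cb ((n : ℤ) - k) ((x : ℤ) - 1 - j))
        - ((x : ℝ) - l) * (∑ j ∈ range l, (j : ℝ) * T j)
        - ((l : ℝ) - 1) * (∑ j ∈ range l, (j : ℝ) * T j) := by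
    rw [Finset.sum_sub_distrib, Finset.sum_sub_distrib, ← Finset.mul_sum, ← Finset.mul_sum,
      ← Finset.mul_sum]
  rw [expand] at tel2
  rw [Finset.sum_range_succ, mul_add]
  have hassoc : ∀ j : ℕ, (j : ℝ) * Cb k j * Cb ((n : ℤ) - k) ((x : ℤ) - j) = (j : ℝ) * T j := by
    intro j; simp only [hT]; ring
  simp only [hassoc] at tel2 ⊢
  simp only [hT] at tel2 ⊢
  nlinarith [tel2]

lemma Cb_pos (a b : ℕ) (h : b ≤ a) : 0 < Cb a b := by
  unfold Cb
  rw [if_pos ⟨Int.natCast_nonneg b, by exact_mod_cast h⟩]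
  simp only [Int.toNat_natCast]
  exact_mod_cast Nat.choose_pos h

theorem ab_rec (n k : ℕ) (hk : 1 ≤ k) (hkn : k < n) :
    ∀ l ∈ Finset.Icc 2 k, ∀ x ∈ Finset.Icc 2 n,
      (x : ℝ) * amap n k (l - 1) (x - 1) - ((x : ℝ) - l) * amap n k (l - 1) x =
          (l : ℝ) * amap n k l x ∧
      (x : ℝ) * bmap n k (l - 1) (x - 1) - ((x : ℝ) - l) * bmap n k (l - 1) x =
          (l : ℝ) * bmap n k l x := by
  intro l hl x hx
  simp only [Finset.mem_Icc] at hl hx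
  obtain ⟨hl2, hlk⟩ := hl
  obtain ⟨hx2, hxn⟩ := hx
  have hl1 : l - 1 + 1 = l := by omega
  have hx1c : ((x - 1 : ℕ) : ℤ) = (x : ℤ) - 1 := by omega
  have hlr : ((l - 1 : ℕ) : ℝ) = (l : ℝ) - 1 := by
    rw [Nat.cast_sub (by omega)]; simp
  have hCnx : 0 < Cb n x := Cb_pos n x hxn
  have hCnx1 : 0 < Cb n ((x : ℤ) - 1) := by
    rw [← hx1c]; exact Cb_pos n (x - 1) (by omega)
  have hrel := Cb_rec (n : ℤ) (x : ℤ)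
  have hA := sumA n k x l
  have hB := sumB n k x l
  have hlR : (1 : ℝ) ≤ (l : ℝ) - 1 := by
    have : (2 : ℝ) ≤ (l : ℝ) := by exact_mod_cast hl2
    linarith
  push_cast at hrel
  set S1 := ∑ j ∈ range l, Cb k j * Cb ((n : ℤ) - k) ((x : ℤ) - 1 - j) with hS1
  set S2 := ∑ j ∈ range l, Cb k j * Cb ((n : ℤ) - k) ((x : ℤ) - j) with hS2
  set S3 := ∑ j ∈ range (l + 1), Cb k j * Cb ((n : ℤ) - k) ((x : ℤ) - j) with hS3
  set B1 := ∑ j ∈ range l, (j : ℝ) * Cb k j * Cb ((n : ℤ) - k) ((x : ℤ) - 1 - j) with hB1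
  set B2 := ∑ j ∈ range l, (j : ℝ) * Cb k j * Cb ((n : ℤ) - k) ((x : ℤ) - j) with hB2
  set B3 := ∑ j ∈ range (l + 1), (j : ℝ) * Cb k j * Cb ((n : ℤ) - k) ((x : ℤ) - j) with hB3
  unfold amap bmap
  rw [hl1, hx1c, hlr]
  rw [← hS1, ← hS2, ← hS3, ← hB1, ← hB2, ← hB3]
  have hCx : Cb n ((x : ℤ) - 1) ≠ 0 := ne_of_gt hCnx1
  have hCx2 : Cb n (x : ℤ) ≠ 0 := ne_of_gt hCnx
  have hl0 : ((l : ℝ) - 1) ≠ 0 := by linarith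
  have hl0' : (l : ℝ) ≠ 0 := by positivity
  constructor
  · have key1 : (x : ℝ) * (1 / Cb n ((x : ℤ) - 1) * S1)
        = ((n : ℝ) - x + 1) * S1 / Cb n (x : ℤ) := by
      field_simp
      linear_combination S1 * hrel
    rw [key1]
    field_simp
    linear_combination hA
  · have key2 : (x : ℝ) * (1 / (((l : ℝ) - 1) * Cb n ((x : ℤ) - 1)) * B1)
        = ((n : ℝ) - x + 1) * B1 / (((l : ℝ) - 1) * Cb n (x : ℤ)) := by
      field_simp
      linear_combination B1 * hrel
    rw [key2]
    field_simp
    linear_combination hB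
end Secretary
end
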